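/- For every integer n ≥ 2, (1/(2^{n/2} Γ(n/2))) ∫₀^{n/4} t^{n/2 − 1} e^{−t/2} dt ≤ (e/4)^{n/2} / √(2π). In other words, if χ²_n denotes a chi-square random variable with n degrees of freedom, then P(χ²_n < n/4) ≤ (e/4)^{n/2}/√(2π). -/

import Mathlib

open Real Stirling

lemma sqrtpi_le_stirling (m : ℕ) (hm : 1 ≤ m) : Real.sqrt π ≤ stirlingSeq m := by
  obtain ⟨k, rfl⟩ := Nat.exists_eq_add_of_le hm
  have ht : Filter.Tendsto (stirlingSeq ∘ Nat.succ) Filter.atTop (nhds (Real.sqrt π)) :=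
    tendsto_stirlingSeq_sqrt_pi.comp (Filter.tendsto_add_atTop_nat 1)
  simpa [Nat.add_comm] using stirlingSeq'_antitone.le_of_tendsto ht k

lemma stirling_le_e (m : ℕ) (hm : 1 ≤ m) : stirlingSeq m ≤ exp 1 / Real.sqrt 2 := by
  obtain ⟨k, rfl⟩ := Nat.exists_eq_add_of_le hm
  have := stirlingSeq'_antitone (Nat.zero_le k)
  simpa [Function.comp, Nat.add_comm, stirlingSeq_one] using this

lemma fact_lower (m : ℕ) (hm : 1 ≤ m) :
    Real.sqrt π * (Real.sqrt (2 * m) * ((m : ℝ) / exp 1) ^ m) ≤ (Nat.factorial m : ℝ) := by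
  have h := sqrtpi_le_stirling m hm
  have hpos : 0 < Real.sqrt (2 * m) * ((m : ℝ) / exp 1) ^ m := by
    have : (0:ℝ) < m := by exact_mod_cast hm
    positivity
  rw [stirlingSeq, le_div_iff₀ hpos] at h
  linarith [h]

lemma fact_upper (m : ℕ) (hm : 1 ≤ m) :
    (Nat.factorial m : ℝ) ≤ (exp 1 / Real.sqrt 2) * (Real.sqrt (2 * m) * ((m : ℝ) / exp 1) ^ m) := by
  have h := stirling_le_e m hm
  have hpos : 0 < Real.sqrt (2 * m) * ((m : ℝ) / exp 1) ^ m := by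
    have : (0:ℝ) < m := by exact_mod_cast hm
    positivity
  rw [stirlingSeq, div_le_iff₀ hpos] at h
  linarith [h]

lemma Gamma_half_int (m : ℕ) :
    Real.Gamma ((m : ℝ) + 1/2) =
      Real.sqrt π * (Nat.factorial (2*m) : ℝ) / (4 ^ m * (Nat.factorial m : ℝ)) := by
  induction m with
  | zero =>
    norm_num
    exact Real.Gamma_one_half_eq
  | succ k ih =>
    have hne : ((k : ℝ) + 1/2) ≠ 0 := by positivity
    have h1 : ((k+1 : ℕ) : ℝ) + 1/2 = ((k : ℝ) + 1/2) + 1 := by push_cast; ring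
    rw [h1, Real.Gamma_add_one hne, ih]
    have h2 : (2 * (k+1)) = (2*k) + 1 + 1 := by ring
    rw [h2, Nat.factorial_succ, Nat.factorial_succ, Nat.factorial_succ]
    have hk4 : (0:ℝ) < 4 ^ k := by positivity
    have hkf : (0:ℝ) < (Nat.factorial k : ℝ) := by exact_mod_cast Nat.factorial_pos k
    push_cast
    field_simp
    ring

lemma sqrt_le_exp_quarter {t : ℝ} (ht : 0 ≤ t) : Real.sqrt t ≤ exp (t/4) := by
  have h1 : t ≤ exp (t/4) ^ 2 := by
    nlinarith [add_one_le_exp (t/4), sq_nonneg (t/4 - 1), exp_pos (t/4)]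
  calc Real.sqrt t ≤ Real.sqrt (exp (t/4) ^ 2) := Real.sqrt_le_sqrt h1
    _ = exp (t/4) := Real.sqrt_sq (exp_pos _).le

lemma exp_five_lt : exp 5 < 148.4132 := by
  have h := exp_one_lt_d9
  have h5 : exp 5 = exp 1 ^ 5 := by
    rw [← Real.exp_nat_mul]; norm_num
  rw [h5]
  have hp : (0:ℝ) ≤ exp 1 := (exp_pos 1).le
  calc exp 1 ^ 5 < 2.7182818286 ^ 5 := by
        apply pow_lt_pow_left₀ h hp
        norm_num
    _ < 148.4132 := by norm_num

lemma pi4_gt : (97.40 : ℝ) < π ^ 4 := by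
  have h := pi_gt_d6
  have : (3.141592:ℝ)^4 ≤ π^4 := pow_le_pow_left₀ (by norm_num) h.le 4
  nlinarith [this]

lemma odd_sqrt_bound {t : ℝ} (ht : 1 ≤ t) :
    Real.sqrt (t + 1/2) ≤ Real.sqrt (2*π) * exp (t/4 - 7/8) := by
  have hB : ((t+3)/4) ^ 4 ≤ exp (t - 1) := by
    have h1 : (t+3)/4 ≤ exp ((t-1)/4) := by
      have := add_one_le_exp ((t-1)/4); linarith
    calc ((t+3)/4) ^ 4 ≤ exp ((t-1)/4) ^ 4 := by
          apply pow_le_pow_left₀ (by linarith) h1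
      _ = exp (t - 1) := by rw [← Real.exp_nat_mul]; ring_nf
  have hpoly : 9 * (t + 1/2) ≤ (t+3)^2 := by nlinarith [sq_nonneg (t - 3/2)]
  have hpoly4 : (9 * (t + 1/2))^4 ≤ ((t+3)^2)^4 :=
    pow_le_pow_left₀ (by linarith) hpoly 4
  have h4 : (t + 1/2)^4 * exp 5 ≤ 16 * π^4 * (exp (t-1))^2 := by
    have hB2 : (((t+3)/4)^4)^2 ≤ (exp (t-1))^2 := by
      apply pow_le_pow_left₀ (by positivity) hB
    have e5 := exp_five_lt
    have p4 := pi4_gt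
    nlinarith [pow_pos (show (0:ℝ) < t + 1/2 by linarith) 4, sq_nonneg (exp (t-1)),
        pow_nonneg (show (0:ℝ) ≤ t + 1/2 by linarith) 4]
  have hs : (t + 1/2)^4 ≤ (2*π*exp (t/2 - 7/4))^4 := by
    have hexp4 : (2*π*exp (t/2 - 7/4))^4 = 16*π^4 * exp (2*t - 7) := by
      rw [mul_pow, mul_pow, ← Real.exp_nat_mul]; ring_nf
    rw [hexp4]
    have hsplit : exp (2*t - 7) * exp 5 = (exp (t-1))^2 := by
      rw [← Real.exp_add, sq, ← Real.exp_add]; ring_nf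
    have he5 : (0:ℝ) < exp 5 := exp_pos _
    rw [← hsplit, ← mul_assoc] at h4
    exact le_of_mul_le_mul_right h4 he5
  have hle : t + 1/2 ≤ 2*π*exp (t/2 - 7/4) :=
    le_of_pow_le_pow_left₀ (by norm_num) (by positivity) hs
  calc Real.sqrt (t + 1/2) ≤ Real.sqrt (2*π*exp (t/2 - 7/4)) := Real.sqrt_le_sqrt hle
    _ = Real.sqrt (2*π) * exp (t/4 - 7/8) := by
        rw [Real.sqrt_mul (by positivity)]
        congr 1
        rw [show exp (t/2 - 7/4) = exp (t/4 - 7/8) ^ 2 by rw [sq, ← Real.exp_add]; ring_nf]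
        exact Real.sqrt_sq (exp_pos _).le

lemma odd_pow_bound (m : ℕ) (hm : 1 ≤ m) :
    ((m:ℝ) + 1/2) ^ m ≤ (m:ℝ) ^ m * exp (1/2) := by
  have hm0 : (0:ℝ) < m := by exact_mod_cast hm
  have h1 : (m:ℝ) + 1/2 ≤ (m:ℝ) * exp (1/(2*m)) := by
    have := add_one_le_exp (1/(2*(m:ℝ)))
    have h2 : (m:ℝ) * (1/(2*(m:ℝ)) + 1) ≤ (m:ℝ) * exp (1/(2*(m:ℝ))) := by
      apply mul_le_mul_of_nonneg_left this hm0.le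
    calc (m:ℝ) + 1/2 = (m:ℝ) * (1/(2*(m:ℝ)) + 1) := by field_simp; ring
      _ ≤ _ := h2
  calc ((m:ℝ) + 1/2) ^ m ≤ ((m:ℝ) * exp (1/(2*(m:ℝ)))) ^ m :=
        pow_le_pow_left₀ (by positivity) h1 m
    _ = (m:ℝ)^m * exp (1/(2*(m:ℝ)))^m := mul_pow _ _ _
    _ = (m:ℝ)^m * exp (1/2) := by
        rw [← Real.exp_nat_mul]
        congr 1
        field_simp

lemma gamma_lower_even (k : ℕ) :
    Real.sqrt (2*π) * ((k:ℝ)+1) ^ (k+1) * exp (-(5/4)*((k:ℝ)+1)) ≤ (Nat.factorial k : ℝ) := by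
  set M : ℝ := (k:ℝ) + 1 with hM
  have hk0 : (0:ℝ) ≤ (k:ℝ) := Nat.cast_nonneg k
  have hM1 : (1:ℝ) ≤ M := by rw [hM]; linarith
  have hM0 : (0:ℝ) < M := by linarith
  have hsqpos : 0 < Real.sqrt M := Real.sqrt_pos.mpr hM0
  have hA0 := fact_lower (k+1) (Nat.le_add_left 1 k)
  have hA : √π * (Real.sqrt (2*M) * (M / exp 1)^(k+1)) ≤ M * (Nat.factorial k : ℝ) := by
    rw [Nat.factorial_succ] at hA0
    push_cast at hA0
    convert hA0 using 2 <;> rw [hM]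
  have hEk : (exp 1 : ℝ) ^ (k+1) = exp M := by
    rw [← Real.exp_nat_mul, hM]; push_cast; ring_nf
  have hexp_id : √π * (Real.sqrt (2*M) * (M / exp 1)^(k+1))
      = M * (Real.sqrt (2*π) * M ^ (k+1) * (exp (-M) / Real.sqrt M)) := by
    rw [div_pow, hEk, Real.sqrt_mul (by norm_num : (0:ℝ) ≤ 2) M,
      Real.sqrt_mul (by norm_num : (0:ℝ) ≤ 2) π, Real.exp_neg]
    have hss2 : Real.sqrt M ^ 2 = (k:ℝ) + 1 := by rw [Real.sq_sqrt hM0.le, hM]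
    field_simp
    linear_combination hss2 - hM
  have hstep : exp (-(5/4)*M) ≤ exp (-M) / Real.sqrt M := by
    rw [le_div_iff₀ hsqpos]
    have h1 : Real.sqrt M ≤ exp (M/4) := sqrt_le_exp_quarter hM0.le
    calc exp (-(5/4)*M) * Real.sqrt M ≤ exp (-(5/4)*M) * exp (M/4) := by
          exact mul_le_mul_of_nonneg_left h1 (exp_pos _).le
      _ = exp (-M) := by rw [← Real.exp_add]; ring_nf
  have h2 : Real.sqrt (2*π) * M ^ (k+1) * (exp (-M) / Real.sqrt M) ≤ (Nat.factorial k : ℝ) := by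
    apply le_of_mul_le_mul_left _ hM0
    rw [← hexp_id]; exact hA
  calc Real.sqrt (2*π) * M ^ (k+1) * exp (-(5/4)*M)
      ≤ Real.sqrt (2*π) * M ^ (k+1) * (exp (-M) / Real.sqrt M) := by
        apply mul_le_mul_of_nonneg_left hstep
        positivity
    _ ≤ _ := h2

set_option maxHeartbeats 2000000 in
lemma gamma_lower_odd (m : ℕ) (hm : 1 ≤ m) :
    Real.sqrt (2*π) * ((m:ℝ)+1/2) ^ ((m:ℝ)+1/2) * exp (-(5/4)*((m:ℝ)+1/2))
      ≤ Real.Gamma ((m:ℝ)+1/2) := by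
  have hm0 : (1:ℝ) ≤ (m:ℝ) := by exact_mod_cast hm
  have hb : (0:ℝ) < (m:ℝ) + 1/2 := by linarith
  have hsplit : ((m:ℝ)+1/2) ^ ((m:ℝ)+1/2) = ((m:ℝ)+1/2)^m * Real.sqrt ((m:ℝ)+1/2) := by
    rw [Real.rpow_add hb, Real.rpow_natCast, Real.sqrt_eq_rpow]
  rw [hsplit, Gamma_half_int]
  have h1 := odd_pow_bound m hm
  have h2 := odd_sqrt_bound hm0
  have step2 : Real.sqrt (2*π) * (((m:ℝ)+1/2)^m * Real.sqrt ((m:ℝ)+1/2)) * exp (-(5/4)*((m:ℝ)+1/2))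
      ≤ 2*π * (m:ℝ)^m * exp (-(m:ℝ)-1) := by
    have hle : ((m:ℝ)+1/2)^m * Real.sqrt ((m:ℝ)+1/2)
        ≤ ((m:ℝ)^m * exp (1/2)) * (Real.sqrt (2*π) * exp ((m:ℝ)/4 - 7/8)) := by
      apply mul_le_mul h1 h2 (Real.sqrt_nonneg _) (by positivity)
    calc Real.sqrt (2*π) * (((m:ℝ)+1/2)^m * Real.sqrt ((m:ℝ)+1/2)) * exp (-(5/4)*((m:ℝ)+1/2))
        ≤ Real.sqrt (2*π) * (((m:ℝ)^m * exp (1/2)) * (Real.sqrt (2*π) * exp ((m:ℝ)/4 - 7/8)))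
            * exp (-(5/4)*((m:ℝ)+1/2)) := by
          apply mul_le_mul_of_nonneg_right _ (exp_pos _).le
          exact mul_le_mul_of_nonneg_left hle (Real.sqrt_nonneg _)
      _ = 2*π * (m:ℝ)^m * exp (-(m:ℝ)-1) := by
          rw [show Real.sqrt (2*π) * (((m:ℝ)^m * exp (1/2)) * (Real.sqrt (2*π) * exp ((m:ℝ)/4 - 7/8)))
                * exp (-(5/4)*((m:ℝ)+1/2))
              = (Real.sqrt (2*π) * Real.sqrt (2*π)) * (m:ℝ)^m
                * (exp (1/2) * exp ((m:ℝ)/4 - 7/8) * exp (-(5/4)*((m:ℝ)+1/2))) by ring,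
            Real.mul_self_sqrt (by positivity), ← Real.exp_add, ← Real.exp_add]
          ring_nf
  refine step2.trans ?_
  have hfpos : (0:ℝ) < 4^m * (Nat.factorial m : ℝ) := by
    have := Nat.factorial_pos m
    have : (0:ℝ) < (Nat.factorial m : ℝ) := by exact_mod_cast this
    positivity
  rw [div_eq_mul_inv, mul_comm (√π * (Nat.factorial (2*m):ℝ)), ← div_eq_inv_mul, le_div_iff₀ hfpos]
  have hB := fact_upper m hm
  have hA := fact_lower (2*m) (by omega)
  have hcast : ((2*m : ℕ):ℝ) = 2*(m:ℝ) := by push_cast; ring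
  rw [hcast] at hA
  have hEm : (exp 1:ℝ)^m = exp (m:ℝ) := by rw [← Real.exp_nat_mul, mul_one]
  have hE2m : (exp 1:ℝ)^(2*m) = exp (2*(m:ℝ)) := by
    rw [← Real.exp_nat_mul]; push_cast; ring_nf
  have hs4 : Real.sqrt (2*(2*(m:ℝ))) = 2 * Real.sqrt (m:ℝ) := by
    rw [show 2*(2*(m:ℝ)) = 4 * (m:ℝ) by ring, Real.sqrt_mul (by norm_num),
      show (4:ℝ) = 2^2 by norm_num, Real.sqrt_sq (by norm_num : (0:ℝ) ≤ 2)]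
  have hs2 : Real.sqrt (2*(m:ℝ)) = Real.sqrt 2 * Real.sqrt (m:ℝ) := Real.sqrt_mul (by norm_num) _
  have hpow2m : (2*(m:ℝ))^(2*m) = 4^m * ((m:ℝ)^m)^2 := by
    rw [two_mul m, pow_add, mul_pow]
    rw [show (4:ℝ)^m = 2^m * 2^m by rw [← mul_pow]; norm_num]
    ring
  have hmid : 2*π * (m:ℝ)^m * exp (-(m:ℝ)-1) * (4^m * (Nat.factorial m:ℝ))
      ≤ 2*π * (m:ℝ)^m * exp (-(m:ℝ)-1)
          * (4^m * ((exp 1 / Real.sqrt 2) * (Real.sqrt (2*m) * ((m:ℝ) / exp 1)^m))) := by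
    apply mul_le_mul_of_nonneg_left _ (by positivity)
    apply mul_le_mul_of_nonneg_left hB (by positivity)
  refine hmid.trans ?_
  have hlow : √π * (√π * (Real.sqrt (2*(2*(m:ℝ))) * ((2*(m:ℝ)) / exp 1)^(2*m)))
      ≤ √π * (Nat.factorial (2*m) : ℝ) :=
    mul_le_mul_of_nonneg_left hA (Real.sqrt_nonneg _)
  refine le_trans (le_of_eq ?_) hlow
  rw [hs4, hs2, div_pow, div_pow, hEm, hE2m, hpow2m]
  have hss2 : Real.sqrt 2 * Real.sqrt 2 = 2 := Real.mul_self_sqrt (by norm_num)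
  have hsspi : √π * √π = π := Real.mul_self_sqrt pi_pos.le
  have hexpE : exp (-(m:ℝ)-1) * exp 1 * exp (2*(m:ℝ)) = exp (m:ℝ) := by
    rw [← Real.exp_add, ← Real.exp_add]; ring_nf
  field_simp
  linear_combination π * hexpE - exp (m:ℝ) * hsspi

lemma gamma_lower (n : ℕ) (hn : 2 ≤ n) :
    Real.sqrt (2*π) * ((n:ℝ)/2) ^ ((n:ℝ)/2) * exp (-(5/4)*((n:ℝ)/2)) ≤ Real.Gamma ((n:ℝ)/2) := by
  rcases Nat.even_or_odd n with ⟨j, hj⟩ | ⟨j, hj⟩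
  · have hj1 : 1 ≤ j := by omega
    obtain ⟨k, rfl⟩ : ∃ k, j = k + 1 := ⟨j - 1, by omega⟩
    have hx : ((n:ℝ))/2 = (k:ℝ) + 1 := by
      subst hj; push_cast; ring
    rw [hx]
    have hΓ : Real.Gamma ((k:ℝ)+1) = (Nat.factorial k : ℝ) := Real.Gamma_nat_eq_factorial k
    rw [hΓ]
    have hrpow : ((k:ℝ)+1) ^ (((k:ℝ)+1) : ℝ) = ((k:ℝ)+1) ^ (k+1 : ℕ) := by
      rw [show ((k:ℝ)+1) = ((k+1 : ℕ) : ℝ) by push_cast; ring, Real.rpow_natCast]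
    rw [show (((k:ℝ)+1) : ℝ) ^ (((k:ℝ)+1) : ℝ) = ((k:ℝ)+1) ^ (k+1 : ℕ) from hrpow]
    exact gamma_lower_even k
  · have hj1 : 1 ≤ j := by omega
    have hx : ((n:ℝ))/2 = (j:ℝ) + 1/2 := by subst hj; push_cast; ring
    rw [hx]
    exact gamma_lower_odd j hj1

/-- chi-square lower-tail bound `P(χ²_n < n/4) ≤ (e/4)^{n/2}/√(2π)`. -/
theorem chi_square_lower_tail (n : ℕ) (hn : 2 ≤ n) :
    (1 / ((2 : ℝ) ^ ((n : ℝ) / 2) * Real.Gamma ((n : ℝ) / 2))) *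
      (∫ t in (0 : ℝ)..((n : ℝ) / 4), t ^ ((n : ℝ) / 2 - 1) * Real.exp (-t / 2)) ≤
    (Real.exp 1 / 4) ^ ((n : ℝ) / 2) / Real.sqrt (2 * Real.pi) := by
  have hsq : (0:ℝ) < Real.sqrt (2*π) := Real.sqrt_pos.mpr (by positivity)
  rcases eq_or_lt_of_le hn with hEq | hn3'
  · -- n = 2
    subst hEq
    have hc : ((2:ℕ):ℝ) = (2:ℝ) := by norm_num
    rw [hc, show (2:ℝ)/2 = 1 by norm_num, show (2:ℝ)/4 = 1/2 by norm_num,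
      Real.rpow_one, Real.Gamma_one, mul_one, Real.rpow_one]
    have hI : (∫ t in (0:ℝ)..(1/2 : ℝ), t ^ ((1:ℝ) - 1) * Real.exp (-t/2)) ≤ 1/2 := by
      have hint : IntervalIntegrable (fun t : ℝ => t ^ ((1:ℝ)-1) * Real.exp (-t/2))
          MeasureTheory.volume 0 (1/2) := by
        simp only [sub_self, Real.rpow_zero, one_mul]
        exact (Real.continuous_exp.comp (continuous_id.neg.div_const 2)).intervalIntegrable 0 (1/2)
      have hb : ∀ t ∈ Set.Icc (0:ℝ) (1/2:ℝ), t ^ ((1:ℝ)-1) * Real.exp (-t/2) ≤ 1 := by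
        intro t ⟨ht0, _⟩
        rw [sub_self, Real.rpow_zero, one_mul]
        calc Real.exp (-t/2) ≤ Real.exp 0 := Real.exp_le_exp.mpr (by linarith)
          _ = 1 := Real.exp_zero
      have := intervalIntegral.integral_mono_on (by norm_num : (0:ℝ) ≤ 1/2) hint
        (intervalIntegrable_const (c := (1:ℝ))) hb
      rw [intervalIntegral.integral_const, smul_eq_mul, sub_zero, mul_one] at this
      exact this
    have hIpos : (0:ℝ) ≤ (∫ t in (0:ℝ)..(1/2 : ℝ), t ^ ((1:ℝ) - 1) * Real.exp (-t/2)) := by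
      apply intervalIntegral.integral_nonneg (by norm_num : (0:ℝ) ≤ 1/2)
      intro t ⟨ht0, _⟩
      positivity
    have he : Real.sqrt (2*π) ≤ exp 1 := by
      have h2pi : 2*π ≤ (exp 1)^2 := by nlinarith [pi_lt_d2, exp_one_gt_d9]
      calc Real.sqrt (2*π) ≤ Real.sqrt ((exp 1)^2) := Real.sqrt_le_sqrt h2pi
        _ = exp 1 := Real.sqrt_sq (exp_pos 1).le
    rw [le_div_iff₀ hsq]
    calc 1/(2:ℝ) * (∫ t in (0:ℝ)..(1/2 : ℝ), t ^ ((1:ℝ) - 1) * Real.exp (-t/2)) * Real.sqrt (2*π)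
        ≤ 1/(2:ℝ) * (1/2) * exp 1 := by
          apply mul_le_mul _ he hsq.le (by positivity)
          apply mul_le_mul_of_nonneg_left hI (by norm_num)
      _ ≤ exp 1/4 := by linarith [exp_pos 1]
  · -- n ≥ 3
    have hn2 : (2:ℝ) ≤ (n:ℝ) := by exact_mod_cast hn
    have hn3 : (3:ℝ) ≤ (n:ℝ) := by exact_mod_cast hn3'
    set x : ℝ := (n:ℝ)/2 with hxdef
    set z : ℝ := (n:ℝ)/4 with hzdef
    set a : ℝ := x - 1 with hadef
    have hx1 : (1:ℝ) ≤ x := by rw [hxdef]; linarith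
    have hx0 : (0:ℝ) < x := by linarith
    have h2x : (0:ℝ) < (2:ℝ) ^ x := rpow_pos_of_pos two_pos x
    have hG : (0:ℝ) < Real.Gamma x := Real.Gamma_pos_of_pos hx0
    have hz : z = x/2 := by rw [hzdef, hxdef]; ring
    have hz0 : (0:ℝ) < z := by rw [hz]; linarith
    have ha0' : (0:ℝ) < a := by rw [hadef, hxdef]; linarith
    have ha0 : (0:ℝ) ≤ a := ha0'.le
    have hza : z ≤ 2*a := by rw [hzdef, hadef, hxdef]; linarith
    have hcont : ContinuousOn (fun t : ℝ => t ^ a * Real.exp (-t/2)) (Set.Icc 0 z) := by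
      apply ContinuousOn.mul
      · intro t _
        exact (Real.continuousAt_rpow_const t a (Or.inr ha0)).continuousWithinAt
      · exact (Real.continuous_exp.comp (continuous_id.neg.div_const 2)).continuousOn
    have hint : IntervalIntegrable (fun t : ℝ => t ^ a * Real.exp (-t/2))
        MeasureTheory.volume 0 z := hcont.intervalIntegrable_of_Icc hz0.le
    have hbound : ∀ t ∈ Set.Icc (0:ℝ) z, t ^ a * Real.exp (-t/2) ≤ z ^ a * Real.exp (-z/2) := by
      intro t ⟨ht0, htz⟩
      rcases eq_or_lt_of_le ht0 with rfl | ht0'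
      · rw [Real.zero_rpow (ne_of_gt ha0'), zero_mul]
        positivity
      · have h1 : t ^ a = z ^ a * (t/z) ^ a := by
          rw [← Real.mul_rpow hz0.le (by positivity)]
          congr 1
          field_simp
        have h2 : (t/z) ^ a ≤ Real.exp (a * (t/z - 1)) := by
          have h3 : t/z ≤ Real.exp (t/z - 1) := by
            have := Real.add_one_le_exp (t/z - 1); linarith
          calc (t/z) ^ a ≤ (Real.exp (t/z - 1)) ^ a :=
                Real.rpow_le_rpow (by positivity) h3 ha0
            _ = Real.exp ((t/z - 1) * a) := (Real.exp_mul _ _).symm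
            _ = Real.exp (a * (t/z - 1)) := by ring_nf
        have h6 : a * (t - z) / z ≤ (t - z)/2 := by
          rw [div_le_div_iff₀ hz0 two_pos]
          nlinarith [mul_nonneg (sub_nonneg.2 htz) (sub_nonneg.2 hza)]
        have h4 : a * (t/z - 1) + (-t/2) ≤ -z/2 := by
          have h5 : a * (t/z - 1) = a * (t-z) / z := by field_simp
          rw [h5]; linarith
        calc t ^ a * Real.exp (-t/2) = z ^ a * ((t/z) ^ a * Real.exp (-t/2)) := by rw [h1]; ring
          _ ≤ z ^ a * (Real.exp (a * (t/z-1)) * Real.exp (-t/2)) := by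
              apply mul_le_mul_of_nonneg_left _ (Real.rpow_nonneg hz0.le a)
              exact mul_le_mul_of_nonneg_right h2 (exp_pos _).le
          _ = z ^ a * Real.exp (a * (t/z-1) + (-t/2)) := by rw [Real.exp_add]
          _ ≤ z ^ a * Real.exp (-z/2) := by
              apply mul_le_mul_of_nonneg_left _ (Real.rpow_nonneg hz0.le a)
              exact Real.exp_le_exp.mpr h4
    have hIbound : (∫ t in (0:ℝ)..z, t ^ a * Real.exp (-t/2)) ≤ z * (z ^ a * Real.exp (-z/2)) := by
      have := intervalIntegral.integral_mono_on hz0.le hint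
        (intervalIntegrable_const (c := z ^ a * Real.exp (-z/2))) hbound
      rw [intervalIntegral.integral_const, smul_eq_mul, sub_zero] at this
      exact this
    have hc0 : (0:ℝ) < 1/((2:ℝ)^x * Real.Gamma x) := by positivity
    have key := gamma_lower n hn
    rw [← hxdef] at key
    have key2 : Real.sqrt (2*π) * (x^x * Real.exp (-(1/4)*x)) ≤ Real.exp x * Real.Gamma x := by
      have h7 := mul_le_mul_of_nonneg_right key (exp_pos x).le
      calc Real.sqrt (2*π) * (x^x * Real.exp (-(1/4)*x))
          = Real.sqrt (2*π) * x^x * Real.exp (-(5/4)*x) * Real.exp x := by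
            rw [mul_assoc, mul_assoc, ← Real.exp_add]; ring_nf
        _ ≤ Real.Gamma x * Real.exp x := h7
        _ = Real.exp x * Real.Gamma x := by ring
    have hBeq : z * (z ^ a * Real.exp (-z/2)) = (x^x/(2:ℝ)^x) * Real.exp (-(1/4)*x) := by
      have h8 : z * z ^ a = z ^ x := by
        rw [show x = a + 1 by rw [hadef]; ring, Real.rpow_add hz0, Real.rpow_one]; ring
      have h9 : z ^ x = x^x/(2:ℝ)^x := by
        rw [hz, Real.div_rpow hx0.le (by norm_num : (0:ℝ) ≤ 2)]
      have h10 : Real.exp (-z/2) = Real.exp (-(1/4)*x) := by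
        rw [hz]; ring_nf
      rw [← mul_assoc, h8, h9, h10]
    have hrhs : (Real.exp 1/4 : ℝ)^x = Real.exp x/((2:ℝ)^x*(2:ℝ)^x) := by
      rw [Real.div_rpow (exp_pos 1).le (by norm_num : (0:ℝ) ≤ 4), Real.exp_one_rpow,
        show (4:ℝ) = 2*2 by norm_num, Real.mul_rpow (by norm_num) (by norm_num)]
    calc (1/((2:ℝ)^x * Real.Gamma x)) * (∫ t in (0:ℝ)..z, t ^ a * Real.exp (-t/2))
        ≤ (1/((2:ℝ)^x * Real.Gamma x)) * (z * (z ^ a * Real.exp (-z/2))) :=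
          mul_le_mul_of_nonneg_left hIbound hc0.le
      _ ≤ (Real.exp 1/4)^x / Real.sqrt (2*π) := by
          rw [hBeq, hrhs, le_div_iff₀ hsq]
          rw [show 1/((2:ℝ)^x * Real.Gamma x) * (x^x/(2:ℝ)^x * Real.exp (-(1/4)*x)) * Real.sqrt (2*π)
              = (Real.sqrt (2*π) * (x^x * Real.exp (-(1/4)*x)))/((2:ℝ)^x * Real.Gamma x * (2:ℝ)^x)
            by field_simp]
          rw [div_le_div_iff₀ (by positivity) (by positivity)]
          calc Real.sqrt (2*π) * (x^x * Real.exp (-(1/4)*x)) * ((2:ℝ)^x*(2:ℝ)^x)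
              ≤ (Real.exp x * Real.Gamma x) * ((2:ℝ)^x*(2:ℝ)^x) := by
                apply mul_le_mul_of_nonneg_right key2 (by positivity)
            _ = Real.exp x * ((2:ℝ)^x * Real.Gamma x * (2:ℝ)^x) := by ring
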